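/- Let k, n be integers with k < 0 and n ≥ k(2k−1), and set m = −2k. Then the number of strict partitions of n with exactly m parts and BG-rank equal to k equals the number of partitions λ with largest part at most −2k and 2|λ| = n − k(2k−1). -/

import Mathlib

/-- The `i`-th entry (1-indexed) of a list of naturals, defaulting to `0`. -/
def entry (d : List ℕ) (i : ℕ) : ℕ := d.getD (i - 1) 0

/-- The alternating partial sum `∑_{i=1}^{m} (−1)^i d_i` of a list `d`. -/
def altSum (d : List ℕ) (m : ℕ) : ℤ :=
  ∑ i ∈ Finset.Icc 1 m, (-1 : ℤ) ^ i * (entry d i : ℤ)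

/-- `d = (d_1, …, d_l)` is an `(a,b)`-sequence: it is a list of positive integers with
`l ≥ b ≥ 1`, `d_i = a + i` for `1 ≤ i ≤ b`, `d_b ≥ d_{b+1} ≥ ⋯ ≥ d_l ≥ 1`, and
`∑_{i=1}^{l} (−1)^i d_i = 0`. -/
def IsABSeq (a b : ℕ) (d : List ℕ) : Prop :=
  1 ≤ b ∧ b ≤ d.length ∧
  (∀ i, 1 ≤ i → i ≤ d.length → 1 ≤ entry d i) ∧
  (∀ i, 1 ≤ i → i ≤ b → entry d i = a + i) ∧
  (∀ i j, b ≤ i → i ≤ j → j ≤ d.length → entry d j ≤ entry d i) ∧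
  altSum d d.length = 0

/-- An (ordinary) partition, recorded as a weakly decreasing list of positive parts. -/
def IsPartitionList (L : List ℕ) : Prop :=
  L.Pairwise (· ≥ ·) ∧ ∀ x ∈ L, 0 < x

/-- A strict partition: a strictly decreasing list of positive parts. -/
def IsStrictPartition (L : List ℕ) : Prop :=
  L.Pairwise (· > ·) ∧ ∀ x ∈ L, 0 < x

/-- The column sequence of the shifted Young diagram of a strict partition `L`:
`colSeq L j = #{ i : 1 ≤ i ≤ m, i ≤ j ≤ λ_i + i − 1 }`. -/
def colSeq (L : List ℕ) (j : ℕ) : ℕ :=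
  ((Finset.Icc 1 L.length).filter (fun i => i ≤ j ∧ j ≤ entry L i + i - 1)).card

/-- The BG-rank of a partition: the number of odd-indexed odd parts minus
the number of even-indexed odd parts (indices starting at 1). -/
def bgRank (L : List ℕ) : ℤ :=
  (((Finset.Icc 1 L.length).filter (fun i => Odd i ∧ Odd (entry L i))).card : ℤ) -
  (((Finset.Icc 1 L.length).filter (fun i => Even i ∧ Odd (entry L i))).card : ℤ)

/-- `qj j n`: the number of strict partitions of `n` whose BG-rank equals `j`. -/
noncomputable def qj (j : ℤ) (n : ℕ) : ℕ :=
  Set.ncard {L : List ℕ | IsStrictPartition L ∧ L.sum = n ∧ bgRank L = j}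

/-! ### Auxiliary machinery for Theorem 3.4(4) -/

/-- number of parts of `μ` that are `≥ i` -/
def cnt (μ : List ℕ) (i : ℕ) : ℕ := μ.countP (fun x => i ≤ x)

/-- the bijection: from a partition `μ` with parts `≤ m` to a strict partition
with `m` parts given by `λ_i = (m + 1 - i) + 2·#{parts of μ ≥ i}`. -/
def gmap (m : ℕ) (μ : List ℕ) : List ℕ :=
  List.ofFn (fun i : Fin m => (m - i) + 2 * cnt μ (i + 1))

lemma entry_ofFn {m : ℕ} (f : Fin m → ℕ) {i : ℕ} (h1 : 1 ≤ i) (h2 : i ≤ m) :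
    entry (List.ofFn f) i = f ⟨i - 1, by omega⟩ := by
  have h : i - 1 < (List.ofFn f).length := by simp; omega
  rw [entry, List.getD_eq_getElem _ _ h, List.getElem_ofFn]

lemma entry_gmap {m : ℕ} (μ : List ℕ) {i : ℕ} (h1 : 1 ≤ i) (h2 : i ≤ m) :
    entry (gmap m μ) i = (m + 1 - i) + 2 * cnt μ i := by
  rw [gmap, entry_ofFn _ h1 h2]
  show (m - (i - 1)) + 2 * cnt μ ((i - 1) + 1) = _
  have h3 : i - 1 + 1 = i := by omega
  rw [h3]
  congr 1
  omega

lemma cnt_anti (μ : List ℕ) {i j : ℕ} (h : i ≤ j) : cnt μ j ≤ cnt μ i :=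
  List.countP_mono_left (fun x _ hx => by simp_all; omega)

lemma cnt_split (μ : List ℕ) (v : ℕ) :
    cnt μ v = μ.count v + cnt μ (v + 1) := by
  induction μ with
  | nil => simp [cnt]
  | cons a l ih =>
    simp only [cnt, List.countP_cons, List.count_cons] at *
    by_cases h : v = a
    · subst h; simp [ih]; omega
    · by_cases h2 : v ≤ a
      · have : v + 1 ≤ a := by omega
        simp [h2, this, ih, Ne.symm h]; ring
      · have : ¬ (v + 1 ≤ a) := by omega
        simp [h2, this, ih, Ne.symm h]

lemma cnt_eq_zero {μ : List ℕ} {m i : ℕ} (hμ : ∀ x ∈ μ, x ≤ m) (h : m < i) :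
    cnt μ i = 0 := by
  rw [cnt, List.countP_eq_zero]
  intro x hx
  have := hμ x hx
  simp; omega

lemma sum_cnt {m : ℕ} (μ : List ℕ) (hμ : ∀ x ∈ μ, x ≤ m) :
    ∑ i ∈ Finset.Icc 1 m, cnt μ i = μ.sum := by
  induction μ with
  | nil => simp [cnt]
  | cons a l ih =>
    have ha : a ≤ m := hμ a (by simp)
    simp only [cnt, List.countP_cons] at *
    rw [Finset.sum_add_distrib, ih (fun x hx => hμ x (by simp [hx]))]
    have : ∑ i ∈ Finset.Icc 1 m, (if (decide (i ≤ a)) = true then 1 else 0)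
        = ((Finset.Icc 1 m).filter (fun i => i ≤ a)).card := by
      rw [Finset.card_filter]
      simp
    rw [this]
    have : (Finset.Icc 1 m).filter (fun i => i ≤ a) = Finset.Icc 1 a := by
      ext x; simp; omega
    rw [this, Nat.card_Icc]
    simp; omega

lemma card_even_Icc (m : ℕ) : ((Finset.Icc 1 m).filter (fun i => Even i)).card = m / 2 := by
  induction m with
  | zero => simp
  | succ m ih =>
    have : Finset.Icc 1 (m + 1) = insert (m + 1) (Finset.Icc 1 m) := by
      ext x; simp; omega
    rw [this, Finset.filter_insert]
    by_cases h : Even (m + 1)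
    · rw [if_pos h, Finset.card_insert_of_notMem (by simp), ih]
      rcases h with ⟨t, ht⟩; omega
    · rw [if_neg h, ih]
      have : Odd (m + 1) := Nat.odd_iff.mpr (by
        rcases Nat.even_or_odd (m+1) with h'|h'
        · exact absurd h' h
        · exact Nat.odd_iff.mp h')
      rcases this with ⟨t, ht⟩; omega

lemma two_mul_sum_range (m : ℕ) : 2 * (∑ i ∈ Finset.range m, (m - i)) = m * (m + 1) := by
  have : ∑ i ∈ Finset.range m, (m - i) = ∑ i ∈ Finset.range m, (i + 1) := by
    rw [← Finset.sum_range_reflect]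
    apply Finset.sum_congr rfl
    intro i hi
    simp at hi; omega
  rw [this, Finset.sum_add_distrib]
  have h := Finset.sum_range_id_mul_two m
  rcases m with _ | m'
  · simp
  · simp only [Finset.sum_const, Finset.card_range, smul_eq_mul, mul_one] at *
    have : (m' + 1) * (m' + 1 - 1) = (m' + 1) * m' := by simp
    rw [this] at h
    nlinarith [h]

lemma length_gmap (m : ℕ) (μ : List ℕ) : (gmap m μ).length = m := by simp [gmap]

lemma gmap_strict (m : ℕ) (μ : List ℕ) : IsStrictPartition (gmap m μ) := by
  constructor
  · rw [gmap, List.pairwise_ofFn]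
    intro i j hij
    have h1 : cnt μ (j + 1) ≤ cnt μ (i + 1) := cnt_anti μ (by omega)
    have h2 : (i : ℕ) < m := i.2
    have h3 : (j : ℕ) < m := j.2
    have h4 : (i : ℕ) < (j : ℕ) := hij
    show (m - (j:ℕ)) + 2 * cnt μ ((j:ℕ) + 1) < (m - (i:ℕ)) + 2 * cnt μ ((i:ℕ) + 1)
    omega
  · intro x hx
    rw [gmap, List.mem_ofFn] at hx
    obtain ⟨i, hi⟩ := hx
    have : (i : ℕ) < m := i.2
    omega

lemma gmap_sum {m : ℕ} (μ : List ℕ) (hμ : ∀ x ∈ μ, x ≤ m) :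
    2 * (gmap m μ).sum = m * (m + 1) + 4 * μ.sum := by
  rw [gmap, List.sum_ofFn]
  have h1 : ∑ i : Fin m, ((m - (i:ℕ)) + 2 * cnt μ ((i:ℕ) + 1))
      = ∑ i ∈ Finset.range m, ((m - i) + 2 * cnt μ (i + 1)) := by
    exact Fin.sum_univ_eq_sum_range (fun i => (m - i) + 2 * cnt μ (i + 1)) m
  rw [h1, Finset.sum_add_distrib, ← Finset.mul_sum]
  have h2 : ∑ i ∈ Finset.range m, cnt μ (i + 1) = ∑ i ∈ Finset.Icc 1 m, cnt μ i := by
    rw [Finset.range_eq_Ico, Finset.sum_Ico_eq_sum_range]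
    rw [show Finset.Icc 1 m = Finset.Ico 1 (m+1) by rw [Finset.Ico_add_one_right_eq_Icc],
      Finset.sum_Ico_eq_sum_range]
    simp [add_comm]
  rw [h2, sum_cnt μ hμ]
  have := two_mul_sum_range m
  omega

lemma gmap_bgRank {m : ℕ} (hm : Even m) (μ : List ℕ) :
    bgRank (gmap m μ) = -((m / 2 : ℕ) : ℤ) := by
  rw [bgRank, length_gmap]
  have hA : (Finset.Icc 1 m).filter (fun i => Odd i ∧ Odd (entry (gmap m μ) i)) = ∅ := by
    ext i
    simp only [Finset.mem_filter, Finset.mem_Icc, Finset.notMem_empty, iff_false, not_and]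
    rintro ⟨h1, h2⟩ hodd hoddE
    rw [entry_gmap μ h1 h2] at hoddE
    rw [Nat.odd_iff] at hodd hoddE
    obtain ⟨t, ht⟩ := hm
    omega
  have hB : (Finset.Icc 1 m).filter (fun i => Even i ∧ Odd (entry (gmap m μ) i))
      = (Finset.Icc 1 m).filter (fun i => Even i) := by
    apply Finset.filter_congr
    intro i hi
    simp only [Finset.mem_Icc] at hi
    rw [entry_gmap μ hi.1 hi.2]
    simp only [and_iff_left_iff_imp]
    intro hev
    rw [Nat.even_iff] at hev
    rw [Nat.odd_iff]
    obtain ⟨t, ht⟩ := hm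
    omega
  rw [hA, hB, card_even_Icc]
  simp

lemma list_eq_of_cnt {μ μ' : List ℕ} (h1 : IsPartitionList μ) (h2 : IsPartitionList μ')
    (h : ∀ i, 1 ≤ i → cnt μ i = cnt μ' i) : μ = μ' := by
  apply List.Perm.eq_of_pairwise' h1.1 h2.1
  rw [List.perm_iff_count]
  intro v
  rcases Nat.eq_zero_or_pos v with hv | hv
  · subst hv
    rw [List.count_eq_zero.2 (fun hmem => by have := h1.2 0 hmem; omega),
      List.count_eq_zero.2 (fun hmem => by have := h2.2 0 hmem; omega)]
  · have e1 := cnt_split μ v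
    have e2 := cnt_split μ' v
    have e3 := h v hv
    have e4 := h (v + 1) (by omega)
    omega

lemma countP_lt_range (D N : ℕ) :
    (List.range D).countP (fun j => decide (j < N)) = min N D := by
  induction D with
  | zero => simp
  | succ D ih =>
    rw [List.range_succ, List.countP_append, ih]
    simp only [List.countP_cons, List.countP_nil]
    by_cases h : D < N
    · simp [h]; omega
    · simp [h]; omega

lemma conj_exists (m : ℕ) (e : ℕ → ℕ) (hm : 1 ≤ m)
    (hanti : ∀ i j, 1 ≤ i → i ≤ j → j ≤ m → e j ≤ e i) :
    ∃ μ : List ℕ, IsPartitionList μ ∧ (∀ x ∈ μ, x ≤ m) ∧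
      (∀ i, 1 ≤ i → i ≤ m → cnt μ i = e i) := by
  set c : ℕ → ℕ := fun j => ((Finset.Icc 1 m).filter (fun i => j ≤ e i)).card with hc
  have hgal : ∀ i j, 1 ≤ i → i ≤ m → (i ≤ c j ↔ j ≤ e i) := by
    intro i j hi him
    constructor
    · intro hic
      by_contra hne
      push_neg at hne
      have hsub : (Finset.Icc 1 m).filter (fun i' => j ≤ e i') ⊆ Finset.Icc 1 (i - 1) := by
        intro i' hi'
        simp only [Finset.mem_filter, Finset.mem_Icc] at hi' ⊢
        obtain ⟨⟨ha, hb⟩, hj⟩ := hi'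
        constructor
        · exact ha
        · by_contra hge
          push_neg at hge
          have := hanti i i' hi (by omega) hb
          omega
      have := Finset.card_le_card hsub
      rw [Nat.card_Icc] at this
      simp only [hc] at hic
      omega
    · intro hje
      have hsub : Finset.Icc 1 i ⊆ (Finset.Icc 1 m).filter (fun i' => j ≤ e i') := by
        intro i' hi'
        simp only [Finset.mem_Icc] at hi'
        simp only [Finset.mem_filter, Finset.mem_Icc]
        refine ⟨⟨hi'.1, by omega⟩, ?_⟩
        have := hanti i' i hi'.1 hi'.2 him
        omega
      have := Finset.card_le_card hsub
      rw [Nat.card_Icc] at this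
      simp only [hc]
      omega
  refine ⟨(List.range (e 1)).map (fun j => c (j + 1)), ⟨?_, ?_⟩, ?_, ?_⟩
  · rw [List.pairwise_map]
    apply List.Pairwise.imp_of_mem (R := (· < ·)) ?_ List.pairwise_lt_range
    intro a b _ _ hab
    show c (b + 1) ≤ c (a + 1)
    apply Finset.card_le_card
    intro x hx
    simp only [Finset.mem_filter] at hx ⊢
    exact ⟨hx.1, by omega⟩
  · intro x hx
    simp only [List.mem_map, List.mem_range] at hx
    obtain ⟨j, hj, rfl⟩ := hx
    have := (hgal 1 (j + 1) le_rfl hm).2 (by omega)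
    omega
  · intro x hx
    simp only [List.mem_map, List.mem_range] at hx
    obtain ⟨j, hj, rfl⟩ := hx
    calc c (j + 1) ≤ (Finset.Icc 1 m).card := Finset.card_filter_le _ _
    _ = m := by rw [Nat.card_Icc]; omega
  · intro i hi him
    rw [cnt, List.countP_map]
    have hco : ∀ j ∈ List.range (e 1),
        (((fun x => decide (i ≤ x)) ∘ (fun j => c (j + 1))) j = true ↔
          (decide (j < e i)) = true) := by
      intro j _
      simp only [Function.comp_apply, decide_eq_true_eq]
      rw [hgal i (j + 1) hi him]
      omega
    rw [List.countP_congr hco, countP_lt_range]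
    have := hanti 1 i le_rfl hi him
    omega

lemma entry_eq_getElem {L : List ℕ} {i : ℕ} (h1 : 1 ≤ i) (h2 : i ≤ L.length) :
    entry L i = L[i - 1]'(by omega) := List.getD_eq_getElem L 0 (by omega)

lemma entry_pos {L : List ℕ} (hpos : ∀ x ∈ L, 0 < x) {i : ℕ} (h1 : 1 ≤ i)
    (h2 : i ≤ L.length) : 0 < entry L i := by
  rw [entry_eq_getElem h1 h2]
  exact hpos _ (List.getElem_mem _)

lemma strict_gap {L : List ℕ} (hL : L.Pairwise (· > ·)) {i j : ℕ} (h1 : 1 ≤ i) (h2 : i ≤ j)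
    (h3 : j ≤ L.length) : entry L j + (j - i) ≤ entry L i := by
  induction j, h2 using Nat.le_induction with
  | base => omega
  | succ j hij ih =>
    have hlt : entry L (j + 1) < entry L j := by
      rw [entry_eq_getElem (show 1 ≤ j + 1 by omega) (by omega),
        entry_eq_getElem (show 1 ≤ j by omega) (by omega)]
      exact (List.pairwise_iff_getElem.1 hL) (j - 1) (j + 1 - 1) (by omega) (by omega) (by omega)
    have := ih (by omega)
    omega

/-- Theorem 3.4(4): for `k < 0`, `n ≥ k(2k−1)`, and `m = −2k`, the number of strict
partitions of `n` with exactly `m` parts and BG-rank `k` equals the number of partitions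
with largest part at most `−2k` and `2|λ| = n − k(2k−1)`. -/
theorem strict_bg_count_case4 (k : ℤ) (n : ℕ) (hk : k < 0) (hn : k * (2 * k - 1) ≤ (n : ℤ)) :
    Set.ncard {L : List ℕ | IsStrictPartition L ∧ L.length = (-2 * k).toNat ∧ L.sum = n ∧
      bgRank L = k} =
    Set.ncard {μ : List ℕ | IsPartitionList μ ∧ (∀ x ∈ μ, (x : ℤ) ≤ -2 * k) ∧
      2 * (μ.sum : ℤ) = (n : ℤ) - k * (2 * k - 1)} := by
  set m : ℕ := (-2 * k).toNat with hmdef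
  have hmz : (m : ℤ) = -2 * k := Int.toNat_of_nonneg (by omega)
  obtain ⟨t, ht⟩ : ∃ t, m = 2 * t := by
    refine ⟨(-k).toNat, ?_⟩
    have : ((-k).toNat : ℤ) = -k := Int.toNat_of_nonneg (by omega)
    omega
  have htpos : 1 ≤ t := by omega
  have hmeven : Even m := ⟨t, by omega⟩
  have hm1 : 1 ≤ m := by omega
  have hmm1 : (m : ℤ) * ((m : ℤ) + 1) = 2 * (k * (2 * k - 1)) := by rw [hmz]; ring
  have hparts : ∀ μ : List ℕ, (∀ x ∈ μ, (x : ℤ) ≤ -2 * k) → ∀ x ∈ μ, x ≤ m := by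
    intro μ h x hx
    have := h x hx
    omega
  have hinj : Set.InjOn (gmap m) {μ : List ℕ | IsPartitionList μ ∧
      (∀ x ∈ μ, (x : ℤ) ≤ -2 * k) ∧ 2 * (μ.sum : ℤ) = (n : ℤ) - k * (2 * k - 1)} := by
    rintro μ ⟨hp, hle, _⟩ μ' ⟨hp', hle', _⟩ heq
    apply list_eq_of_cnt hp hp'
    intro i hi
    rcases le_or_gt i m with him | him
    · have e1 := entry_gmap (m := m) μ hi him
      have e2 := entry_gmap (m := m) μ' hi him
      rw [heq] at e1
      omega
    · rw [cnt_eq_zero (hparts μ hle) him, cnt_eq_zero (hparts μ' hle') him]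
  have himage : {L : List ℕ | IsStrictPartition L ∧ L.length = m ∧ L.sum = n ∧ bgRank L = k}
      = gmap m '' {μ : List ℕ | IsPartitionList μ ∧ (∀ x ∈ μ, (x : ℤ) ≤ -2 * k) ∧
        2 * (μ.sum : ℤ) = (n : ℤ) - k * (2 * k - 1)} := by
    ext L
    simp only [Set.mem_setOf_eq, Set.mem_image]
    constructor
    · rintro ⟨⟨hsort, hpos⟩, hlen, hsum, hbg⟩
      -- parity analysis from the BG-rank
      rw [bgRank, hlen] at hbg
      set A := (Finset.Icc 1 m).filter (fun i => Odd i ∧ Odd (entry L i)) with hA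
      set B := (Finset.Icc 1 m).filter (fun i => Even i ∧ Odd (entry L i)) with hB
      have hBsub : B ⊆ (Finset.Icc 1 m).filter (fun i => Even i) := by
        intro i hi
        rw [hB, Finset.mem_filter] at hi
        rw [Finset.mem_filter]
        exact ⟨hi.1, hi.2.1⟩
      have hBle : B.card ≤ t := by
        have := Finset.card_le_card hBsub
        rw [card_even_Icc] at this
        omega
      have hBt : B.card = t ∧ A.card = 0 := by
        have h1 : (A.card : ℤ) - B.card = k := hbg
        have h2 : (t : ℤ) = -k := by omega
        constructor <;> omega
      have hBeq : B = (Finset.Icc 1 m).filter (fun i => Even i) := by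
        apply Finset.eq_of_subset_of_card_le hBsub
        rw [card_even_Icc]
        omega
      have hAe : A = ∅ := Finset.card_eq_zero.1 hBt.2
      have hpar : ∀ i, 1 ≤ i → i ≤ m → (entry L i % 2 = if i % 2 = 0 then 1 else 0) := by
        intro i h1 h2
        by_cases hi2 : i % 2 = 0
        · have hiB : i ∈ B := by
            rw [hBeq]
            simp only [Finset.mem_filter, Finset.mem_Icc]
            exact ⟨⟨h1, h2⟩, Nat.even_iff.2 hi2⟩
          rw [hB, Finset.mem_filter] at hiB
          have := hiB.2.2
          rw [Nat.odd_iff] at this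
          simp [hi2, this]
        · have hiA : i ∉ A := by rw [hAe]; simp
          have hodd : Odd i := Nat.odd_iff.2 (by omega)
          have hne : ¬ Odd (entry L i) := by
            intro hcon
            apply hiA
            rw [hA, Finset.mem_filter, Finset.mem_Icc]
            exact ⟨⟨h1, h2⟩, hodd, hcon⟩
          rw [Nat.odd_iff] at hne
          simp [hi2]
          omega
      have hgap : ∀ i j, 1 ≤ i → i ≤ j → j ≤ m → entry L j + (j - i) ≤ entry L i := by
        intro i j a b c
        exact strict_gap hsort a b (by omega)
      have hposm : 0 < entry L m := entry_pos hpos hm1 (by omega)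
      have hlow : ∀ i, 1 ≤ i → i ≤ m → m + 1 - i ≤ entry L i := by
        intro i h1 h2
        have := hgap i m h1 h2 le_rfl
        omega
      set e : ℕ → ℕ := fun i => (entry L i - (m + 1 - i)) / 2 with he
      have hkey : ∀ i, 1 ≤ i → i ≤ m → entry L i = (m + 1 - i) + 2 * e i := by
        intro i h1 h2
        have hp := hpar i h1 h2
        have hl := hlow i h1 h2
        have hm2 : m % 2 = 0 := by omega
        simp only [he]
        by_cases hi2 : i % 2 = 0
        · rw [if_pos hi2] at hp; omega
        · rw [if_neg hi2] at hp; omega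
      have hanti : ∀ i j, 1 ≤ i → i ≤ j → j ≤ m → e j ≤ e i := by
        intro i j h1 h2 h3
        have hg := hgap i j h1 h2 h3
        have k1 := hkey i h1 (by omega)
        have k2 := hkey j (by omega) h3
        omega
      obtain ⟨μ, hμp, hμle, hμcnt⟩ := conj_exists m e hm1 hanti
      have hgL : gmap m μ = L := by
        apply List.ext_getElem (by rw [length_gmap, hlen])
        intro i0 hi1 hi2
        rw [length_gmap] at hi1
        have h1 : 1 ≤ i0 + 1 := by omega
        have h2 : i0 + 1 ≤ m := by omega
        have hg := entry_gmap (m := m) μ h1 h2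
        rw [hμcnt _ h1 h2] at hg
        have hkey' := hkey (i0 + 1) h1 h2
        rw [entry_eq_getElem h1 (by rw [length_gmap]; omega)] at hg
        rw [entry_eq_getElem h1 (by omega)] at hkey'
        simp only [Nat.add_sub_cancel] at hg hkey'
        omega
      refine ⟨μ, ⟨hμp, fun x hx => by have := hμle x hx; omega, ?_⟩, hgL⟩
      have hg := gmap_sum μ hμle
      rw [hgL, hsum] at hg
      have hz : 2 * (n : ℤ) = (m : ℤ) * ((m : ℤ) + 1) + 4 * (μ.sum : ℤ) := by exact_mod_cast hg
      rw [hmm1] at hz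
      linarith
    · rintro ⟨μ, ⟨hp, hle, hs⟩, rfl⟩
      refine ⟨gmap_strict m μ, length_gmap m μ, ?_, ?_⟩
      · have hg := gmap_sum μ (hparts μ hle)
        have hz : 2 * ((gmap m μ).sum : ℤ) = (m : ℤ) * ((m : ℤ) + 1) + 4 * (μ.sum : ℤ) := by
          exact_mod_cast hg
        rw [hmm1] at hz
        have : ((gmap m μ).sum : ℤ) = (n : ℤ) := by linarith
        exact_mod_cast this
      · rw [gmap_bgRank hmeven μ]
        have h2 : m / 2 = t := by omega
        rw [h2]
        omega
  rw [himage, Set.ncard_image_of_injOn hinj]
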